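/- arXiv:1604.00813 — 6 statements merged into one kernel-verified Lean document; each statement's English description precedes it below -/
import Mathlib

section
/- Let ρ be a density matrix on a finite-dimensional Hilbert space and A an observable (Hermitian operator) with Tr(ρA) = 0. If there exist constants c₁ > 0 and c₂ ≥ 0 such that log Tr(e^{τA} ρ) ≤ c₁τ² + c₂ for all τ ≥ 0, then for every x ≥ 0, Tr(Π_{≥x}^A ρ) ≤ exp(−x²/(4c₁) + c₂), where Π_{≥x}^A is the spectral projection of A onto eigenvalues ≥ x. -/
open Matrix
open scoped ComplexOrder

/-- The spectral projection of a Hermitian matrix `A` onto the eigenspaces with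
eigenvalue satisfying the predicate `P`. -/
noncomputable def specProj {n : ℕ} {A : Matrix (Fin n) (Fin n) ℂ}
    (hA : A.IsHermitian) (P : ℝ → Prop) [DecidablePred P] : Matrix (Fin n) (Fin n) ℂ :=
  ∑ i : Fin n, (if P (hA.eigenvalues i) then
    Matrix.vecMulVec (hA.eigenvectorBasis i) (fun j => star (hA.eigenvectorBasis i j))
    else (0 : Matrix (Fin n) (Fin n) ℂ))

private lemma trace_vecMulVec_mul {n : ℕ} (u w : Fin n → ℂ) (ρ : Matrix (Fin n) (Fin n) ℂ) :
    Matrix.trace (Matrix.vecMulVec u w * ρ) = dotProduct w (ρ.mulVec u) := by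
  simp only [Matrix.trace, Matrix.diag, Matrix.mul_apply, Matrix.vecMulVec_apply,
    dotProduct, Matrix.mulVec, Finset.mul_sum]
  rw [Finset.sum_comm]
  exact Finset.sum_congr rfl fun k _ => Finset.sum_congr rfl fun i _ => by ring

private lemma exp_smul_hermitian {n : ℕ} {A : Matrix (Fin n) (Fin n) ℂ}
    (hA : A.IsHermitian) (τ : ℝ) :
    NormedSpace.exp ((τ : ℂ) • A) =
      (hA.eigenvectorUnitary : Matrix (Fin n) (Fin n) ℂ) *
        Matrix.diagonal (fun i => Complex.exp (τ * hA.eigenvalues i)) *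
        star (hA.eigenvectorUnitary : Matrix (Fin n) (Fin n) ℂ) := by
  set V : Matrix (Fin n) (Fin n) ℂ := (hA.eigenvectorUnitary : Matrix (Fin n) (Fin n) ℂ)
  have h1 : star V * V = 1 := (Matrix.mem_unitaryGroup_iff').mp hA.eigenvectorUnitary.2
  have h2 : V * star V = 1 := (Matrix.mem_unitaryGroup_iff).mp hA.eigenvectorUnitary.2
  have hVinv : V⁻¹ = star V := Matrix.inv_eq_left_inv h1
  have hVunit : IsUnit V := ⟨⟨V, star V, h2, h1⟩, rfl⟩
  have : (τ : ℂ) • A = V * ((τ : ℂ) • Matrix.diagonal (RCLike.ofReal ∘ hA.eigenvalues)) * V⁻¹ := by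
    rw [hVinv]
    conv_lhs => rw [hA.spectral_theorem]
    rw [Matrix.mul_smul, Matrix.smul_mul]
    rfl
  rw [this, Matrix.exp_conj V _ hVunit, hVinv]
  congr 2
  rw [← Matrix.diagonal_smul, Matrix.exp_diagonal]
  refine congrArg Matrix.diagonal (funext fun i => ?_)
  simp [Pi.coe_exp, ← Complex.exp_eq_exp_ℂ, Function.comp, smul_eq_mul]

theorem chernoff_markov_from_mgf {n : ℕ} (ρ A : Matrix (Fin n) (Fin n) ℂ)
    (hρ : ρ.PosSemidef) (hρtr : ρ.trace = 1) (hA : A.IsHermitian)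
    (hmean : Matrix.trace (ρ * A) = 0)
    (c₁ c₂ : ℝ) (hc₁ : 0 < c₁) (hc₂ : 0 ≤ c₂)
    (hmgf : ∀ τ : ℝ, 0 ≤ τ →
      Real.log (Matrix.trace (NormedSpace.exp ((τ : ℂ) • A) * ρ)).re ≤ c₁ * τ ^ 2 + c₂) :
    ∀ x : ℝ, 0 ≤ x →
      (Matrix.trace (specProj hA (fun t => x ≤ t) * ρ)).re ≤
        Real.exp (-(x ^ 2 / (4 * c₁)) + c₂) := by
  intro x hx
  set V : Matrix (Fin n) (Fin n) ℂ := (hA.eigenvectorUnitary : Matrix (Fin n) (Fin n) ℂ) with hV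
  set lam : Fin n → ℝ := hA.eigenvalues with hlam
  set v : Fin n → Fin n → ℂ := fun i => ⇑(hA.eigenvectorBasis i) with hv
  -- the nonnegative weights
  set q : Fin n → ℝ := fun i =>
    (dotProduct (star (v i)) (ρ.mulVec (v i))).re with hqdef
  have hq_nonneg : ∀ i, 0 ≤ q i := by
    intro i
    have := hρ.dotProduct_mulVec_nonneg (v i)
    exact (Complex.le_def.mp this).1
  have hq_eq : ∀ i, dotProduct (star (v i)) (ρ.mulVec (v i)) = (q i : ℂ) := by
    intro i
    have h := hρ.dotProduct_mulVec_nonneg (v i)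
    have him : (dotProduct (star (v i)) (ρ.mulVec (v i))).im = 0 :=
      ((Complex.le_def.mp h).2).symm
    exact Complex.ext (by simp [hqdef]) (by simp [him])
  -- trace of the spectral projection
  have hS : (Matrix.trace (specProj hA (fun t => x ≤ t) * ρ)).re =
      ∑ i, if x ≤ lam i then q i else 0 := by
    rw [specProj, Finset.sum_mul, Matrix.trace_sum]
    rw [Complex.re_sum]
    refine Finset.sum_congr rfl fun i _ => ?_
    by_cases h : x ≤ lam i
    · simp only [if_pos h, if_pos (show x ≤ hA.eigenvalues i from h)]
      rw [trace_vecMulVec_mul]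
      have hw : (fun j => star (hA.eigenvectorBasis i j)) = star (v i) := rfl
      rw [hw]
    · simp [h, show ¬ x ≤ hA.eigenvalues i from h]
  -- trace of exp(τ A) ρ
  have hT : ∀ τ : ℝ, (Matrix.trace (NormedSpace.exp ((τ : ℂ) • A) * ρ)).re =
      ∑ i, Real.exp (τ * lam i) * q i := by
    intro τ
    rw [exp_smul_hermitian hA τ]
    have hM : ∀ i, (star V * ρ * V) i i =
        dotProduct (star (v i)) (ρ.mulVec (v i)) := by
      intro i
      simp only [Matrix.mul_apply, Matrix.star_apply, dotProduct, Matrix.mulVec,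
        Pi.star_apply, Finset.sum_mul, Finset.mul_sum]
      rw [Finset.sum_comm]
      refine Finset.sum_congr rfl fun j _ => Finset.sum_congr rfl fun k _ => ?_
      have h1 : V j i = v i j := Matrix.IsHermitian.eigenvectorUnitary_apply hA j i
      have h2 : V k i = v i k := Matrix.IsHermitian.eigenvectorUnitary_apply hA k i
      rw [h1, h2]; ring
    have htr : Matrix.trace (V * Matrix.diagonal (fun i => Complex.exp (τ * lam i)) * star V * ρ)
        = ∑ i, Complex.exp (τ * lam i) * (star V * ρ * V) i i := by
      rw [mul_assoc, mul_assoc, Matrix.trace_mul_comm V, mul_assoc]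
      simp [Matrix.trace, Matrix.diag, Matrix.diagonal_mul]
    rw [htr, Complex.re_sum]
    refine Finset.sum_congr rfl fun i _ => ?_
    rw [hM i, hq_eq i]
    have : Complex.exp (τ * lam i) = ((Real.exp (τ * lam i) : ℝ) : ℂ) := by
      rw [Complex.ofReal_exp]; norm_cast
    rw [this, ← Complex.ofReal_mul, Complex.ofReal_re]
  -- the Chernoff bound with τ = x / (2 c₁)
  set τ : ℝ := x / (2 * c₁) with hτdef
  have hτ : 0 ≤ τ := div_nonneg hx (by linarith)
  have hTb : (∑ i, Real.exp (τ * lam i) * q i) ≤ Real.exp (c₁ * τ ^ 2 + c₂) := by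
    have hTnn : 0 ≤ ∑ i, Real.exp (τ * lam i) * q i :=
      Finset.sum_nonneg fun i _ => mul_nonneg (Real.exp_pos _).le (hq_nonneg i)
    rcases hTnn.lt_or_eq with hpos | heq
    · have := hmgf τ hτ
      rw [hT τ] at this
      exact (Real.log_le_iff_le_exp hpos).mp this
    · rw [← heq]; exact (Real.exp_pos _).le
  have hkey : (∑ i, if x ≤ lam i then q i else 0) * Real.exp (τ * x) ≤
      ∑ i, Real.exp (τ * lam i) * q i := by
    rw [Finset.sum_mul]
    refine Finset.sum_le_sum fun i _ => ?_
    by_cases h : x ≤ lam i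
    · simp only [if_pos h]
      rw [mul_comm (Real.exp (τ * lam i)) (q i)]
      exact mul_le_mul_of_nonneg_left
        (Real.exp_le_exp.mpr (mul_le_mul_of_nonneg_left h hτ)) (hq_nonneg i)
    · simp only [if_neg h, zero_mul]
      exact mul_nonneg (Real.exp_pos _).le (hq_nonneg i)
  have hfinal : (∑ i, if x ≤ lam i then q i else 0) ≤
      Real.exp (c₁ * τ ^ 2 + c₂ - τ * x) := by
    rw [Real.exp_sub]
    rw [le_div_iff₀ (Real.exp_pos _)]
    exact hkey.trans hTb
  rw [hS]
  refine hfinal.trans (le_of_eq (congrArg Real.exp ?_))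
  rw [hτdef]
  field_simp
  ring
end

section
/- Let A and B be Hermitian operators on a finite-dimensional Hilbert space and ρ a density matrix with spectral decomposition ρ = Σⱼ pⱼ |ψⱼ⟩⟨ψⱼ|. Then for any real τ, Tr(e^{τ(A+B)} ρ) ≤ ‖e^{−τB} e^{τ(A+B)} e^{−τA}‖ · √(Tr(e^{2τA} ρ)) · √(Tr(e^{2τB} ρ)), where ‖·‖ is the operator norm. -/
open Matrix
open scoped ComplexOrder

section Aux

variable {n : ℕ}

private lemma inner_single_toEuclideanCLM (M : Matrix (Fin n) (Fin n) ℂ) (j : Fin n) :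
    inner (𝕜 := ℂ) (EuclideanSpace.single j (1 : ℂ))
      (Matrix.toEuclideanCLM (𝕜 := ℂ) M (EuclideanSpace.single j (1 : ℂ))) = M j j := by
  have h1 : (EuclideanSpace.single j (1 : ℂ)) =
      WithLp.toLp 2 (Pi.single j 1) := rfl
  rw [h1, Matrix.toEuclideanCLM_toLp, ← h1, EuclideanSpace.inner_single_left]
  simp [Matrix.toLin'_apply, Matrix.mulVec_single]

private lemma trace_eq_sum_inner (M : Matrix (Fin n) (Fin n) ℂ) :
    M.trace = ∑ j, inner (𝕜 := ℂ) (EuclideanSpace.single j (1 : ℂ))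
      (Matrix.toEuclideanCLM (𝕜 := ℂ) M (EuclideanSpace.single j (1 : ℂ))) := by
  rw [Matrix.trace]
  exact Finset.sum_congr rfl fun j _ => (inner_single_toEuclideanCLM M j).symm

private lemma inner_toEuclideanCLM (M : Matrix (Fin n) (Fin n) ℂ)
    (u v : EuclideanSpace ℂ (Fin n)) :
    inner (𝕜 := ℂ) (Matrix.toEuclideanCLM (𝕜 := ℂ) Mᴴ u) v =
      inner (𝕜 := ℂ) u (Matrix.toEuclideanCLM (𝕜 := ℂ) M v) := by
  have h : Matrix.toEuclideanCLM (𝕜 := ℂ) Mᴴ =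
      ContinuousLinearMap.adjoint (Matrix.toEuclideanCLM (𝕜 := ℂ) M) := by
    rw [← ContinuousLinearMap.star_eq_adjoint, ← map_star]
    rfl
  rw [h, ContinuousLinearMap.adjoint_inner_left]

end Aux

set_option maxHeartbeats 1000000 in
theorem mgf_splitting_bound {n : ℕ} (ρ A B : Matrix (Fin n) (Fin n) ℂ)
    (hρ : ρ.PosSemidef) (hρtr : ρ.trace = 1)
    (hA : A.IsHermitian) (hB : B.IsHermitian) (τ : ℝ) :
    (Matrix.trace (NormedSpace.exp ((τ : ℂ) • (A + B)) * ρ)).re ≤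
      ‖Matrix.toEuclideanCLM (𝕜 := ℂ)
          (NormedSpace.exp ((-τ : ℂ) • B) * NormedSpace.exp ((τ : ℂ) • (A + B)) *
            NormedSpace.exp ((-τ : ℂ) • A))‖ *
        Real.sqrt (Matrix.trace (NormedSpace.exp ((2 * τ : ℂ) • A) * ρ)).re *
        Real.sqrt (Matrix.trace (NormedSpace.exp ((2 * τ : ℂ) • B) * ρ)).re := by
  classical
  obtain ⟨S, hSherm, hSS⟩ : ∃ S : Matrix (Fin n) (Fin n) ℂ, Sᴴ = S ∧ S * S = ρ := by
    open scoped MatrixOrder in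
    exact ⟨CFC.sqrt ρ, (CFC.sqrt_nonneg ρ).posSemidef.isHermitian, CFC.sqrt_mul_sqrt_self ρ hρ.nonneg⟩
  -- exponentials
  set eA := NormedSpace.exp ((τ : ℂ) • A) with heAdef
  set eB := NormedSpace.exp ((τ : ℂ) • B) with heBdef
  set X := NormedSpace.exp ((τ : ℂ) • (A + B)) with hXdef
  set C := NormedSpace.exp ((-τ : ℂ) • B) * X * NormedSpace.exp ((-τ : ℂ) • A) with hCdef
  -- Hermitian exponentials
  have hherm : ∀ (M : Matrix (Fin n) (Fin n) ℂ) (t : ℝ), M.IsHermitian →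
      (NormedSpace.exp ((t : ℂ) • M)).IsHermitian := fun M t hM => by
    apply Matrix.IsHermitian.exp
    unfold Matrix.IsHermitian
    rw [Matrix.conjTranspose_smul, hM]
    simp
  have heA : eAᴴ = eA := hherm A τ hA
  have heB : eBᴴ = eB := hherm B τ hB
  -- inverse identities
  have hinv : ∀ (M : Matrix (Fin n) (Fin n) ℂ),
      NormedSpace.exp ((τ : ℂ) • M) * NormedSpace.exp ((-τ : ℂ) • M) = 1 := fun M => by
    rw [← Matrix.exp_add_of_commute ((τ : ℂ) • M) ((-τ : ℂ) • M)
      (((Commute.refl M).smul_left _).smul_right _)]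
    have : (τ : ℂ) • M + (-τ : ℂ) • M = 0 := by
      rw [← add_smul]; simp
    rw [this, NormedSpace.exp_zero]
  have hinv' : ∀ (M : Matrix (Fin n) (Fin n) ℂ),
      NormedSpace.exp ((-τ : ℂ) • M) * NormedSpace.exp ((τ : ℂ) • M) = 1 := fun M => by
    rw [← Matrix.exp_add_of_commute ((-τ : ℂ) • M) ((τ : ℂ) • M)
      (((Commute.refl M).smul_left _).smul_right _)]
    have : (-τ : ℂ) • M + (τ : ℂ) • M = 0 := by
      rw [← add_smul]; simp
    rw [this, NormedSpace.exp_zero]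
  have hXsplit : eB * C * eA = X := by
    have h1 := hinv B
    have h2 := hinv' A
    calc eB * C * eA
        = (eB * NormedSpace.exp ((-τ : ℂ) • B)) * X *
            (NormedSpace.exp ((-τ : ℂ) • A) * eA) := by
          rw [hCdef]; simp only [mul_assoc]
      _ = X := by rw [h1, h2, one_mul, mul_one]
  -- doubling identities
  have hdouble : ∀ (M : Matrix (Fin n) (Fin n) ℂ),
      NormedSpace.exp ((τ : ℂ) • M) * NormedSpace.exp ((τ : ℂ) • M) =
        NormedSpace.exp ((2 * τ : ℂ) • M) := fun M => by
    rw [← Matrix.exp_add_of_commute ((τ : ℂ) • M) ((τ : ℂ) • M) (Commute.refl _)]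
    congr 1
    rw [← add_smul]; ring_nf
  -- vectors
  set φ := Matrix.toEuclideanCLM (𝕜 := ℂ) (n := Fin n)
  set e : Fin n → EuclideanSpace ℂ (Fin n) := fun j => EuclideanSpace.single j (1 : ℂ) with he
  set x : Fin n → EuclideanSpace ℂ (Fin n) := fun j => φ (eA * S) (e j) with hx
  set y : Fin n → EuclideanSpace ℂ (Fin n) := fun j => φ (eB * S) (e j) with hy
  -- key trace rewriting
  have htrace : (Matrix.trace (X * ρ)) = ∑ j, inner (𝕜 := ℂ) (y j) (φ C (x j)) := by
    have h1 : X * ρ = (eB * C * eA) * (S * S) := by rw [hXsplit, hSS]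
    have h2 : Matrix.trace ((eB * C * eA) * (S * S)) =
        Matrix.trace (S * eB * C * eA * S) := by
      rw [show (eB * C * eA) * (S * S) = (eB * C * eA * S) * S from by simp only [mul_assoc],
        Matrix.trace_mul_comm]
      congr 1
      simp only [mul_assoc]
    rw [h1, h2, trace_eq_sum_inner]
    refine Finset.sum_congr rfl fun j _ => ?_
    have hsplit : S * eB * C * eA * S = (eB * S)ᴴ * (C * (eA * S)) := by
      rw [Matrix.conjTranspose_mul, hSherm, heB]
      simp only [mul_assoc]
    rw [hsplit, _root_.map_mul, ContinuousLinearMap.mul_apply, ← inner_toEuclideanCLM,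
      Matrix.conjTranspose_conjTranspose]
    simp only [hx, hy, _root_.map_mul, ContinuousLinearMap.mul_apply]
    rfl
  -- norms squared
  have hnormsq : ∀ (M : Matrix (Fin n) (Fin n) ℂ), Mᴴ = M →
      ∑ j, ‖φ (M * S) (e j)‖ ^ 2 =
        (Matrix.trace (NormedSpace.exp ((2 * τ : ℂ) • (0:Matrix (Fin n) (Fin n) ℂ)) * ρ)).re →
        True := fun _ _ _ => trivial
  have hsumsq : ∀ (M : Matrix (Fin n) (Fin n) ℂ), Mᴴ = M →
      ∑ j, ‖φ (M * S) (e j)‖ ^ 2 = (Matrix.trace (M * M * ρ)).re := fun M hM => by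
    have : ∀ j, (‖φ (M * S) (e j)‖ : ℝ) ^ 2 =
        (inner (𝕜 := ℂ) (φ (M * S) (e j)) (φ (M * S) (e j))).re := by
      intro j
      rw [← RCLike.re_to_complex]
      exact (inner_self_eq_norm_sq _).symm
    simp_rw [this]
    have h2 : ∀ j, inner (𝕜 := ℂ) (φ (M * S) (e j)) (φ (M * S) (e j)) =
        inner (𝕜 := ℂ) (e j) (φ ((M * S)ᴴ * (M * S)) (e j)) := by
      intro j
      calc inner (𝕜 := ℂ) (φ (M * S) (e j)) (φ (M * S) (e j))
          = inner (𝕜 := ℂ) (φ ((M * S)ᴴ)ᴴ (e j)) (φ (M * S) (e j)) := by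
            rw [Matrix.conjTranspose_conjTranspose]
        _ = inner (𝕜 := ℂ) (e j) (φ ((M * S)ᴴ) (φ (M * S) (e j))) :=
            by rw [inner_toEuclideanCLM]
        _ = inner (𝕜 := ℂ) (e j) (φ ((M * S)ᴴ * (M * S)) (e j)) := by
            simp only [_root_.map_mul, ContinuousLinearMap.mul_apply]
    simp_rw [h2]
    have h3 : (M * S)ᴴ * (M * S) = S * (M * M) * S := by
      rw [Matrix.conjTranspose_mul, hSherm, hM]
      simp only [mul_assoc]
    rw [h3]
    have h4 : Matrix.trace (M * M * ρ) = Matrix.trace (S * (M * M) * S) := by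
      rw [← hSS, show M * M * (S * S) = (M * M * S) * S from by simp only [mul_assoc],
        Matrix.trace_mul_comm]
      congr 1
      simp only [mul_assoc]
    rw [h4, trace_eq_sum_inner, Complex.re_sum]
  have hA2 : ∑ j, ‖x j‖ ^ 2 = (Matrix.trace (NormedSpace.exp ((2 * τ : ℂ) • A) * ρ)).re := by
    rw [hx]
    rw [← hdouble A]; exact hsumsq eA heA
  have hB2 : ∑ j, ‖y j‖ ^ 2 = (Matrix.trace (NormedSpace.exp ((2 * τ : ℂ) • B) * ρ)).re := by
    rw [hy]
    rw [← hdouble B]; exact hsumsq eB heB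
  -- main chain
  have hre : (Matrix.trace (X * ρ)).re = ∑ j, (inner (𝕜 := ℂ) (y j) (φ C (x j))).re := by
    rw [htrace, Complex.re_sum]
  rw [hre]
  have step1 : ∑ j, (inner (𝕜 := ℂ) (y j) (φ C (x j))).re ≤
      ∑ j, ‖φ C‖ * (‖x j‖ * ‖y j‖) := by
    refine Finset.sum_le_sum fun j _ => ?_
    calc (inner (𝕜 := ℂ) (y j) (φ C (x j))).re
        ≤ ‖inner (𝕜 := ℂ) (y j) (φ C (x j))‖ := Complex.re_le_norm _
      _ ≤ ‖y j‖ * ‖φ C (x j)‖ := norm_inner_le_norm _ _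
      _ ≤ ‖y j‖ * (‖φ C‖ * ‖x j‖) := by
          exact mul_le_mul_of_nonneg_left ((φ C).le_opNorm _) (norm_nonneg _)
      _ = ‖φ C‖ * (‖x j‖ * ‖y j‖) := by ring
  refine step1.trans ?_
  rw [← Finset.mul_sum]
  rw [← hA2, ← hB2]
  have step2 : ∑ j, ‖x j‖ * ‖y j‖ ≤
      Real.sqrt (∑ j, ‖x j‖ ^ 2) * Real.sqrt (∑ j, ‖y j‖ ^ 2) :=
    Real.sum_mul_le_sqrt_mul_sqrt _ _ _
  calc ‖φ C‖ * ∑ j, ‖x j‖ * ‖y j‖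
      ≤ ‖φ C‖ * (Real.sqrt (∑ j, ‖x j‖ ^ 2) * Real.sqrt (∑ j, ‖y j‖ ^ 2)) :=
        mul_le_mul_of_nonneg_left step2 (norm_nonneg _)
    _ = ‖φ C‖ * Real.sqrt (∑ j, ‖x j‖ ^ 2) * Real.sqrt (∑ j, ‖y j‖ ^ 2) := by ring
end

section
/- For all real x with 0 ≤ x ≤ 1/4, (1/2) log(1−x) − (1/6) log(1−3x) ≤ (3/2) x². -/
open Real Set

noncomputable def gfun : ℝ → ℝ :=
  fun x => 3 / 2 * x ^ 2 - 1 / 2 * Real.log (1 - x) + 1 / 6 * Real.log (1 - 3 * x)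

lemma gfun_hasDeriv {x : ℝ} (hx : x < 1 / 3) :
    HasDerivAt gfun (3 * x + 1 / (2 * (1 - x)) - 1 / (2 * (1 - 3 * x))) x := by
  have h1 : (1 : ℝ) - x ≠ 0 := by nlinarith
  have h3 : (1 : ℝ) - 3 * x ≠ 0 := by nlinarith
  have d1 : HasDerivAt (fun y : ℝ => Real.log (1 - y)) (-1 / (1 - x)) x := by
    have h : HasDerivAt (fun y : ℝ => 1 - y) (-1) x := by
      simpa using (hasDerivAt_id x).const_sub (1 : ℝ)
    simpa using h.log h1
  have d3 : HasDerivAt (fun y : ℝ => Real.log (1 - 3 * y)) (-3 / (1 - 3 * x)) x := by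
    have h : HasDerivAt (fun y : ℝ => 1 - 3 * y) (-3) x := by
      simpa using ((hasDerivAt_id x).const_mul (3 : ℝ)).const_sub (1 : ℝ)
    simpa using h.log h3
  have dsq : HasDerivAt (fun y : ℝ => 3 / 2 * y ^ 2) (3 / 2 * (2 * x)) x := by
    have := (hasDerivAt_pow 2 x).const_mul (3 / 2 : ℝ)
    simpa using this
  have := (dsq.sub (d1.const_mul (1 / 2 : ℝ))).add (d3.const_mul (1 / 6 : ℝ))
  refine this.congr_deriv ?_
  field_simp
  ring

lemma gfun_deriv {x : ℝ} (hx : x < 1 / 3) :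
    deriv gfun x = 3 * x + 1 / (2 * (1 - x)) - 1 / (2 * (1 - 3 * x)) :=
  (gfun_hasDeriv hx).deriv

lemma sqrt2_sq : Real.sqrt 2 ^ 2 = 2 := Real.sq_sqrt (by norm_num)

lemma sqrt2_lb : (1 : ℝ) < Real.sqrt 2 := by
  nlinarith [sqrt2_sq, Real.sqrt_nonneg 2]

lemma sqrt2_ub : Real.sqrt 2 < 3 / 2 := by
  nlinarith [sqrt2_sq, Real.sqrt_nonneg 2]

lemma g_quarter_nonneg : 0 ≤ gfun (1 / 4) := by
  have h34 : (1 : ℝ) - 1 / 4 = 3 / 4 := by norm_num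
  have h14 : (1 : ℝ) - 3 * (1 / 4) = 1 / 4 := by norm_num
  have l34 : Real.log (3 / 4) = Real.log 3 - Real.log 4 :=
    Real.log_div (by norm_num) (by norm_num)
  have l14 : Real.log (1 / 4 : ℝ) = -Real.log 4 := by
    rw [show (1 / 4 : ℝ) = 4⁻¹ by norm_num, Real.log_inv]
  have l4 : Real.log 4 = 2 * Real.log 2 := by
    rw [show (4 : ℝ) = 2 ^ 2 by norm_num, Real.log_pow]; push_cast; ring
  have l9 : 2 * Real.log 3 = 3 * Real.log 2 + Real.log (9 / 8) := by
    have hd : Real.log (9 / 8 : ℝ) = Real.log 9 - Real.log 8 :=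
      Real.log_div (by norm_num) (by norm_num)
    have h9' : Real.log 9 = 2 * Real.log 3 := by
      rw [show (9 : ℝ) = 3 ^ 2 by norm_num, Real.log_pow]; push_cast; ring
    have h8 : Real.log 8 = 3 * Real.log 2 := by
      rw [show (8 : ℝ) = 2 ^ 3 by norm_num, Real.log_pow]; push_cast; ring
    rw [hd, h9', h8] at *
    linarith
  have l98 : Real.log (9 / 8) ≤ 1 / 8 := by
    have := Real.log_le_sub_one_of_pos (show (0:ℝ) < 9 / 8 by norm_num)
    linarith
  have hlb := Real.log_two_gt_d9
  have hub := Real.log_two_lt_d9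
  unfold gfun
  rw [h34, h14, l34, l14, l4]
  nlinarith [l9, l98, hlb, hub]

theorem log_combination_le_quadratic :
    ∀ x : ℝ, 0 ≤ x → x ≤ 1 / 4 →
      (1 / 2) * Real.log (1 - x) - (1 / 6) * Real.log (1 - 3 * x) ≤ (3 / 2) * x ^ 2 := by
  intro x hx0 hx4
  set s : ℝ := (2 - Real.sqrt 2) / 3 with hs
  have hs0 : 0 ≤ s := by
    have := sqrt2_ub; rw [hs]; linarith
  have hs4 : s < 1 / 3 := by
    have := sqrt2_lb; rw [hs]; linarith
  have hcont : ∀ y ∈ Icc (0:ℝ) (1/4), ContinuousAt gfun y := by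
    intro y hy
    exact (gfun_hasDeriv (by linarith [hy.2] : y < 1/3)).continuousAt
  have key : 0 ≤ gfun x := by
    rcases le_or_gt x s with hxs | hxs
    · -- monotone on [0, s]
      have hmono : MonotoneOn gfun (Icc 0 s) := by
        apply monotoneOn_of_deriv_nonneg (convex_Icc 0 s)
        · intro y hy
          exact ((gfun_hasDeriv (by linarith [hy.2] : y < 1/3)).continuousAt).continuousWithinAt
        · intro y hy
          rw [interior_Icc] at hy
          exact (gfun_hasDeriv (by linarith [hy.2] : y < 1/3)).differentiableAt.differentiableWithinAt
        · intro y hy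
          rw [interior_Icc] at hy
          obtain ⟨hy0, hys⟩ := hy
          have hy3 : y < 1/3 := by linarith
          rw [gfun_deriv hy3]
          have h1 : (0:ℝ) < 1 - y := by linarith
          have h3 : (0:ℝ) < 1 - 3*y := by linarith
          have hq : 0 ≤ 9*y^2 - 12*y + 2 := by
            have h2 : Real.sqrt 2 ≤ 2 - 3*y := by
              rw [hs] at hys; linarith
            nlinarith [sqrt2_sq, Real.sqrt_nonneg 2]
          have key : 3*y + 1/(2*(1-y)) - 1/(2*(1-3*y))
              = y*(9*y^2-12*y+2)/((1-y)*(1-3*y)) := by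
            field_simp; ring
          rw [key]
          apply div_nonneg (by nlinarith) (by positivity)
      have h0 : gfun 0 = 0 := by
        unfold gfun; simp
      have := hmono (Set.mem_Icc.mpr ⟨le_refl 0, hs0⟩) (Set.mem_Icc.mpr ⟨hx0, hxs⟩) hx0
      rw [h0] at this; exact this
    · -- antitone on [s, 1/4]
      have hanti : AntitoneOn gfun (Icc s (1/4)) := by
        apply antitoneOn_of_deriv_nonpos (convex_Icc s (1/4))
        · intro y hy
          exact ((gfun_hasDeriv (by linarith [hy.2] : y < 1/3)).continuousAt).continuousWithinAt
        · intro y hy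
          rw [interior_Icc] at hy
          exact (gfun_hasDeriv (by linarith [hy.2] : y < 1/3)).differentiableAt.differentiableWithinAt
        · intro y hy
          rw [interior_Icc] at hy
          obtain ⟨hys, hy4⟩ := hy
          have hy3 : y < 1/3 := by linarith
          have hy0 : 0 ≤ y := le_trans hs0 hys.le
          rw [gfun_deriv hy3]
          have h1 : (0:ℝ) < 1 - y := by linarith
          have h3 : (0:ℝ) < 1 - 3*y := by linarith
          have hq : 9*y^2 - 12*y + 2 ≤ 0 := by
            have h2 : 2 - 3*y < Real.sqrt 2 := by
              rw [hs] at hys; linarith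
            have h2' : (0:ℝ) < 2 - 3*y := by linarith
            nlinarith [sqrt2_sq, Real.sqrt_nonneg 2]
          have key : 3*y + 1/(2*(1-y)) - 1/(2*(1-3*y))
              = y*(9*y^2-12*y+2)/((1-y)*(1-3*y)) := by
            field_simp; ring
          rw [key]
          apply div_nonpos_of_nonpos_of_nonneg (by nlinarith) (by positivity)
      have hxm : x ∈ Icc s (1/4) := Set.mem_Icc.mpr ⟨hxs.le, hx4⟩
      have h4m : (1/4 : ℝ) ∈ Icc s (1/4) := Set.mem_Icc.mpr ⟨by linarith, le_refl _⟩
      have := hanti hxm h4m hx4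
      linarith [g_quarter_nonneg]
  unfold gfun at key
  linarith
end

section
/- Let A and B be Hermitian operators, and suppose there exists λ > 0 such that ‖ad_{A+B}^{m-1}([A,B])‖ ≤ (2λ)^{m−1} m! ‖[A,B]‖ and ‖ad_B^n(ad_{A+B}^m(B))‖ ≤ 2^{m−1} λ^{n+m−1} (n+m)! ‖[A,B]‖ for all n ≥ 0, m ≥ 1. Then for |x| < 1/(3λ), the operator B̃(x) := e^{−xB} e^{x(A+B)} B e^{−x(A+B)} e^{xB} satisfies ‖B̃(x) − B‖ ≤ |x| ‖[A,B]‖ / ((1 − 3λ|x|)(1 − λ|x|)). -/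
open Matrix

set_option maxHeartbeats 1600000
set_option synthInstance.maxHeartbeats 800000
set_option linter.unusedSectionVars false

/-- The commutator `[X, Y] = XY - YX` of matrices. -/
noncomputable def matComm {n : ℕ} (X Y : Matrix (Fin n) (Fin n) ℂ) : Matrix (Fin n) (Fin n) ℂ :=
  X * Y - Y * X

/-- Iterated adjoint action `ad_X^k (Y)`. -/
noncomputable def adPow {n : ℕ} (X : Matrix (Fin n) (Fin n) ℂ) : ℕ → Matrix (Fin n) (Fin n) ℂ →
    Matrix (Fin n) (Fin n) ℂ
  | 0, Y => Y
  | k + 1, Y => matComm X (adPow X k Y)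

/-- Operator norm of a matrix, viewed as an operator on `EuclideanSpace ℂ (Fin n)`. -/
noncomputable def opNorm {n : ℕ} (M : Matrix (Fin n) (Fin n) ℂ) : ℝ :=
  ‖Matrix.toEuclideanCLM (𝕜 := ℂ) M‖

namespace InteractionAux

/-- generic norm bound for sums -/
lemma norm_le_of_hasSum {E : Type*} [NormedAddCommGroup E] {f : ℕ → E} {a : E}
    (hf : HasSum f a) {b : ℕ → ℝ} {s : ℝ} (hb : HasSum b s) (h : ∀ n, ‖f n‖ ≤ b n) :
    ‖a‖ ≤ s := by
  have hsum : Summable fun n => ‖f n‖ :=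
    Summable.of_nonneg_of_le (fun _ => norm_nonneg _) h hb.summable
  calc ‖a‖ = ‖∑' n, f n‖ := by rw [hf.tsum_eq]
    _ ≤ ∑' n, ‖f n‖ := norm_tsum_le_tsum_norm hsum
    _ ≤ ∑' n, b n := Summable.tsum_le_tsum h hsum hb.summable
    _ = s := hb.tsum_eq

noncomputable instance ratNormedAlgebraOfComplex {A : Type*} [NormedRing A] [NormedAlgebra ℂ A] :
    NormedAlgebra ℚ A :=
  NormedAlgebra.restrictScalars ℚ ℂ A

instance ratContinuousSMulComplex : ContinuousSMul ℚ ℂ :=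
  continuousSMul_of_algebraMap ℚ ℂ (by
    have : (algebraMap ℚ ℂ) = fun q : ℚ => ((q : ℝ) : ℂ) := by ext q <;> simp
    rw [this]; fun_prop)

variable {𝔸 : Type*} [NormedRing 𝔸] [NormedAlgebra ℂ 𝔸] [CompleteSpace 𝔸]

/-- The adjoint action `ad_u = L_u - R_u` as a continuous linear map. -/
noncomputable def adL (u : 𝔸) : 𝔸 →L[ℂ] 𝔸 :=
  ContinuousLinearMap.mul ℂ 𝔸 u - (ContinuousLinearMap.mul ℂ 𝔸).flip u

lemma adL_apply (u y : 𝔸) : adL u y = u * y - y * u := by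
  simp [adL, ContinuousLinearMap.mul_apply', ContinuousLinearMap.flip_apply]

lemma adL_smul (c : ℂ) (u : 𝔸) : adL (c • u) = c • adL u := by
  ext y
  simp [adL_apply, smul_sub, smul_mul_assoc, mul_smul_comm]

/-- Left multiplication as an algebra homomorphism into the CLM algebra. -/
noncomputable def mulLeftHom : 𝔸 →ₐ[ℂ] (𝔸 →L[ℂ] 𝔸) :=
  AlgHom.ofLinearMap (ContinuousLinearMap.mul ℂ 𝔸).toLinearMap
    (by ext y; simp [ContinuousLinearMap.mul_apply'])
    (fun u v => by
      ext y
      simp [ContinuousLinearMap.mul_apply', ContinuousLinearMap.mul_apply, mul_assoc])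

@[simp] lemma mulLeftHom_apply (u : 𝔸) :
    (mulLeftHom u : 𝔸 →L[ℂ] 𝔸) = ContinuousLinearMap.mul ℂ 𝔸 u := rfl

/-- Right multiplication as an algebra homomorphism from the opposite algebra. -/
noncomputable def mulRightHom : 𝔸ᵐᵒᵖ →ₐ[ℂ] (𝔸 →L[ℂ] 𝔸) :=
  AlgHom.ofLinearMap
    ((ContinuousLinearMap.mul ℂ 𝔸).flip.toLinearMap ∘ₗ
      (MulOpposite.opLinearEquiv ℂ).symm.toLinearMap)
    (by ext y; simp [ContinuousLinearMap.mul_apply', ContinuousLinearMap.flip_apply])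
    (fun u v => by
      ext y
      simp [ContinuousLinearMap.mul_apply', ContinuousLinearMap.flip_apply,
        ContinuousLinearMap.mul_apply, mul_assoc])

@[simp] lemma mulRightHom_apply (u : 𝔸) :
    (mulRightHom (MulOpposite.op u) : 𝔸 →L[ℂ] 𝔸) = (ContinuousLinearMap.mul ℂ 𝔸).flip u := rfl

lemma exp_mulLeft (u : 𝔸) :
    NormedSpace.exp (ContinuousLinearMap.mul ℂ 𝔸 u)
      = ContinuousLinearMap.mul ℂ 𝔸 (NormedSpace.exp u) := by
  have hc : Continuous (mulLeftHom (𝔸 := 𝔸)) := (ContinuousLinearMap.mul ℂ 𝔸).continuous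
  have h := NormedSpace.map_exp (mulLeftHom (𝔸 := 𝔸)) hc u
  simpa using h.symm

lemma exp_mulRight (u : 𝔸) :
    NormedSpace.exp ((ContinuousLinearMap.mul ℂ 𝔸).flip u)
      = (ContinuousLinearMap.mul ℂ 𝔸).flip (NormedSpace.exp u) := by
  have hc : Continuous (mulRightHom (𝔸 := 𝔸)) :=
    ((ContinuousLinearMap.mul ℂ 𝔸).flip.continuous).comp MulOpposite.continuous_unop
  have h := NormedSpace.map_exp (mulRightHom (𝔸 := 𝔸)) hc (MulOpposite.op u)
  rw [NormedSpace.exp_op] at h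
  simpa using h.symm

lemma commute_mulLeft_mulRight (u : 𝔸) :
    Commute (ContinuousLinearMap.mul ℂ 𝔸 u) ((ContinuousLinearMap.mul ℂ 𝔸).flip u) := by
  show _ = _
  ext y
  simp [ContinuousLinearMap.mul_apply, ContinuousLinearMap.mul_apply',
    ContinuousLinearMap.flip_apply, mul_assoc]

/-- Hadamard's lemma, operator form: `exp(ad_u) y = exp(u) y exp(-u)`. -/
lemma exp_adL (u y : 𝔸) :
    NormedSpace.exp (adL u) y = NormedSpace.exp u * y * NormedSpace.exp (-u) := by
  have h1 : adL u = ContinuousLinearMap.mul ℂ 𝔸 u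
      + -((ContinuousLinearMap.mul ℂ 𝔸).flip u) := sub_eq_add_neg _ _
  have h2 : -((ContinuousLinearMap.mul ℂ 𝔸).flip u)
      = (ContinuousLinearMap.mul ℂ 𝔸).flip (-u) := (_root_.map_neg _ u).symm
  rw [h1, NormedSpace.exp_add_of_commute ((commute_mulLeft_mulRight u).neg_right), h2,
    exp_mulRight, exp_mulLeft]
  simp [ContinuousLinearMap.mul_apply, ContinuousLinearMap.mul_apply',
    ContinuousLinearMap.flip_apply, mul_assoc]

lemma hasSum_exp_apply (S : 𝔸 →L[ℂ] 𝔸) (v : 𝔸) :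
    HasSum (fun k : ℕ => ((k.factorial : ℂ))⁻¹ • ((S ^ k) v)) (NormedSpace.exp S v) := by
  have h := NormedSpace.exp_series_hasSum_exp' (𝕂 := ℂ) S
  have h2 := (ContinuousLinearMap.apply ℂ 𝔸 v).hasSum h
  simpa using h2

lemma smul_clm_pow (c : ℂ) (W : 𝔸 →L[ℂ] 𝔸) (k : ℕ) (v : 𝔸) :
    ((c • W) ^ k) v = c ^ k • ((W ^ k) v) := by
  induction k with
  | zero => simp
  | succ k ih =>
    have h1 : ((c • W) ^ (k+1)) v = (c • W) (((c • W) ^ k) v) := by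
      rw [pow_succ', ContinuousLinearMap.mul_apply]
    have h2 : (W ^ (k+1)) v = W ((W ^ k) v) := by
      rw [pow_succ', ContinuousLinearMap.mul_apply]
    rw [h1, h2, ih, ContinuousLinearMap.smul_apply, _root_.map_smul, smul_smul, pow_succ']

/-- The core analytic estimate, in an arbitrary complex Banach algebra. -/
lemma main_bound (b' h' : 𝔸) (lam x K : ℝ) (hlam : 0 < lam) (hK : 0 ≤ K)
    (hcomm : ∀ nn m : ℕ, 1 ≤ m →
      ‖((adL b') ^ nn) (((adL h') ^ m) b')‖ ≤
        2 ^ (m - 1) * lam ^ (nn + m - 1) * (Nat.factorial (nn + m)) * K)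
    (hx : |x| < 1 / (3 * lam)) :
    ‖NormedSpace.exp (adL (-((x : ℂ) • b')))
        (NormedSpace.exp (adL ((x : ℂ) • h')) b' - b')‖ ≤
      |x| * K / ((1 - 3 * lam * |x|) * (1 - lam * |x|)) := by
  have hx0 : (0:ℝ) ≤ |x| := abs_nonneg x
  have hr0 : (0:ℝ) ≤ lam * |x| := mul_nonneg hlam.le hx0
  have hr3 : 3 * (lam * |x|) < 1 := by
    have h3 : (0:ℝ) < 3 * lam := by positivity
    have := (lt_div_iff₀ h3).mp hx
    nlinarith
  have h1r : (0:ℝ) < 1 - lam * |x| := by nlinarith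
  have h13r : (0:ℝ) < 1 - 3 * (lam * |x|) := by linarith
  set S : 𝔸 →L[ℂ] 𝔸 := adL (-((x : ℂ) • b')) with hS
  set T : 𝔸 →L[ℂ] 𝔸 := adL ((x : ℂ) • h') with hT
  -- exp S b' = b'
  have hSb : NormedSpace.exp S b' = b' := by
    rw [hS, exp_adL, neg_neg]
    have hc : Commute (-((x:ℂ) • b')) b' := ((Commute.refl b').smul_left (x:ℂ)).neg_left
    have hc' := (hc.exp_left)
    rw [hc'.eq, mul_assoc, ← NormedSpace.exp_add_of_commute ((Commute.refl ((x:ℂ) • b')).neg_left),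
      neg_add_cancel, NormedSpace.exp_zero, mul_one]
  -- the sum representation
  have hF : HasSum (fun m : ℕ => NormedSpace.exp S (((Nat.factorial m : ℂ))⁻¹ • ((T ^ m) b')))
      (NormedSpace.exp S (NormedSpace.exp T b')) :=
    (NormedSpace.exp S).hasSum (hasSum_exp_apply T b')
  have hF0 : NormedSpace.exp S (((Nat.factorial 0 : ℂ))⁻¹ • ((T ^ 0) b')) = b' := by
    simp [hSb]
  have hF1 : HasSum
      (fun m : ℕ => ((Nat.factorial (m+1) : ℂ))⁻¹ • NormedSpace.exp S ((T ^ (m+1)) b'))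
      (NormedSpace.exp S (NormedSpace.exp T b' - b')) := by
    have heq : NormedSpace.exp S (NormedSpace.exp T b' - b')
        = NormedSpace.exp S (NormedSpace.exp T b') - b' := by
      rw [_root_.map_sub, hSb]
    rw [heq]
    have h' := (hasSum_nat_add_iff'
      (f := fun m : ℕ => NormedSpace.exp S (((Nat.factorial m : ℂ))⁻¹ • ((T ^ m) b')))
      (g := NormedSpace.exp S (NormedSpace.exp T b')) 1).mpr hF
    simpa [_root_.map_smul, Finset.sum_range_one, hSb] using h'
  -- term bounds
  have hterm : ∀ m : ℕ,
      ‖((Nat.factorial (m+1) : ℂ))⁻¹ • NormedSpace.exp S ((T ^ (m+1)) b')‖ ≤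
        (|x| * K / (1 - lam * |x|)^2) * (2 * (lam * |x|) / (1 - lam * |x|))^m := by
    intro m
    -- inner bound on ‖exp S (T^(m+1) b')‖
    have hv := hasSum_exp_apply S ((T ^ (m+1)) b')
    set C : ℝ := ((Nat.factorial (m+1) : ℝ)) * 2^m * lam^m * |x|^(m+1) * K with hC
    have hbsum : HasSum
        (fun k : ℕ => (((k + (m+1)).choose (m+1) : ℝ) * (lam * |x|)^k) * C)
        ((1/(1 - lam * |x|)^(m+2)) * C) := by
      have hgeo := hasSum_choose_mul_geometric_of_norm_lt_one (𝕜 := ℝ) (m+1)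
        (r := lam * |x|) (by rw [Real.norm_eq_abs, abs_of_nonneg hr0]; linarith)
      simpa using hgeo.mul_right C
    have hb : ∀ k : ℕ, ‖((Nat.factorial k : ℂ))⁻¹ • ((S ^ k) ((T ^ (m+1)) b'))‖ ≤
        (((k + (m+1)).choose (m+1) : ℝ) * (lam * |x|)^k) * C := by
      intro k
      have hSpow : (S ^ k) ((T ^ (m+1)) b')
          = ((-(x:ℂ))^k * (x:ℂ)^(m+1)) • (((adL b') ^ k) (((adL h') ^ (m+1)) b')) := by
        have e1 : S = (-(x:ℂ)) • adL b' := by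
          rw [hS]
          have : (-((x:ℂ) • b')) = ((-(x:ℂ)) • b') := (neg_smul _ _).symm
          rw [this, adL_smul]
        have e2 : T = (x:ℂ) • adL h' := by rw [hT, adL_smul]
        have hTv : (T ^ (m+1)) b' = ((x:ℂ)^(m+1)) • (((adL h') ^ (m+1)) b') := by
          rw [e2, smul_clm_pow]
        rw [hTv, _root_.map_smul, e1, smul_clm_pow, smul_smul, mul_comm]
      have hnorm1 : ‖((Nat.factorial k : ℂ))⁻¹ • ((S ^ k) ((T ^ (m+1)) b'))‖
          = ((Nat.factorial k : ℝ))⁻¹ * (|x|^(k + (m+1)) *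
              ‖((adL b') ^ k) (((adL h') ^ (m+1)) b')‖) := by
        rw [hSpow, norm_smul, norm_smul]
        simp [norm_mul, norm_pow, Complex.norm_real, abs_of_nonneg, pow_add]
      have hcb := hcomm k (m+1) (Nat.le_add_left 1 m)
      have hsub1 : (m + 1) - 1 = m := rfl
      have hsub2 : k + (m + 1) - 1 = k + m := by omega
      rw [hsub1, hsub2] at hcb
      have hfac : ((k + (m+1)).choose (m+1) : ℝ) * (Nat.factorial (m+1) : ℝ)
          * (Nat.factorial k : ℝ) = (Nat.factorial (k + (m+1)) : ℝ) := by
        have := Nat.choose_mul_factorial_mul_factorial (Nat.le_add_left (m+1) k)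
        have h2 : k + (m+1) - (m+1) = k := by omega
        rw [h2] at this
        exact_mod_cast this
      have hfk : (0:ℝ) < (Nat.factorial k : ℝ) := by exact_mod_cast (Nat.factorial_pos k)
      rw [hnorm1]
      have hstep : ((Nat.factorial k : ℝ))⁻¹ * (|x|^(k + (m+1)) *
            ‖((adL b') ^ k) (((adL h') ^ (m+1)) b')‖)
          ≤ ((Nat.factorial k : ℝ))⁻¹ * (|x|^(k + (m+1)) *
            (2 ^ m * lam ^ (k + m) * (Nat.factorial (k + (m+1)) : ℝ) * K)) := by
        apply mul_le_mul_of_nonneg_left _ (by positivity)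
        apply mul_le_mul_of_nonneg_left _ (by positivity)
        exact_mod_cast hcb
      refine hstep.trans (le_of_eq ?_)
      rw [hC, ← hfac]
      field_simp
      ring
    have hinner := norm_le_of_hasSum hv hbsum hb
    -- now multiply by (m+1)!⁻¹
    rw [norm_smul]
    have hfm : (0:ℝ) < (Nat.factorial (m+1) : ℝ) := by exact_mod_cast (Nat.factorial_pos (m+1))
    have hnf : ‖((Nat.factorial (m+1) : ℂ))⁻¹‖ = ((Nat.factorial (m+1) : ℝ))⁻¹ := by
      rw [norm_inv]
      norm_num
    rw [hnf]
    have := mul_le_mul_of_nonneg_left hinner (le_of_lt (inv_pos.mpr hfm))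
    refine this.trans (le_of_eq ?_)
    rw [hC]
    field_simp
    have hpm : (1 - lam * |x|)⁻¹ ^ m * (1 - lam * |x|) ^ m = 1 := by
      rw [← mul_pow, inv_mul_cancel₀ (ne_of_gt h1r), one_pow]
    linear_combination (-(-(lam * lam ^ m * |x| ^ 2 * |x| ^ m * K * 2 ^ m * 2) +
      lam ^ 2 * lam ^ m * |x| ^ 3 * |x| ^ m * K * 2 ^ m + lam ^ m * |x| * |x| ^ m * K * 2 ^ m)) * hpm
  -- outer geometric sum
  have hq0 : (0:ℝ) ≤ 2 * (lam * |x|) / (1 - lam * |x|) := by positivity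
  have hq1 : 2 * (lam * |x|) / (1 - lam * |x|) < 1 := by
    rw [div_lt_one h1r]; linarith
  have houter : HasSum
      (fun m : ℕ => (|x| * K / (1 - lam * |x|)^2) * (2 * (lam * |x|) / (1 - lam * |x|))^m)
      ((|x| * K / (1 - lam * |x|)^2) * (1 - 2 * (lam * |x|) / (1 - lam * |x|))⁻¹) :=
    (hasSum_geometric_of_lt_one hq0 hq1).mul_left _
  have hfinal := norm_le_of_hasSum hF1 houter hterm
  refine hfinal.trans (le_of_eq ?_)
  have hne1 : (1 - lam * |x|) ≠ 0 := ne_of_gt h1r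
  have hne3 : (1 - 3 * (lam * |x|)) ≠ 0 := ne_of_gt h13r
  have h2q : 1 - 2 * (lam * |x|) / (1 - lam * |x|) = (1 - 3 * (lam * |x|)) / (1 - lam * |x|) := by
    field_simp
    ring
  rw [h2q]
  have h313 : 1 - 3 * lam * |x| = 1 - 3 * (lam * |x|) := by ring
  rw [h313]
  field_simp

end InteractionAux

open InteractionAux

section Transfer

variable {N : ℕ}

local notation "φe" => Matrix.toEuclideanCLM (𝕜 := ℂ) (n := Fin N)

lemma opNorm_def (M : Matrix (Fin N) (Fin N) ℂ) : opNorm M = ‖φe M‖ := rfl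

lemma phi_adPow (X Y : Matrix (Fin N) (Fin N) ℂ) (k : ℕ) :
    φe (adPow X k Y) = ((adL (φe X)) ^ k) (φe Y) := by
  induction k with
  | zero => simp [adPow]
  | succ k ih =>
    show φe (matComm X (adPow X k Y)) = _
    rw [matComm, _root_.map_sub, _root_.map_mul, _root_.map_mul, ih, pow_succ', ContinuousLinearMap.mul_apply,
      adL_apply]

lemma phi_exp (M : Matrix (Fin N) (Fin N) ℂ) :
    φe (NormedSpace.exp M) = NormedSpace.exp (φe M) := by
  let ℓ : Matrix (Fin N) (Fin N) ℂ ≃ₗ[ℂ]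
      (EuclideanSpace ℂ (Fin N) →L[ℂ] EuclideanSpace ℂ (Fin N)) :=
    (AlgEquivClass.toAlgEquiv φe).toLinearEquiv
  let ℓc := ℓ.toContinuousLinearEquiv
  have hco : ∀ Y : Matrix (Fin N) (Fin N) ℂ, ℓc Y = φe Y := fun _ => rfl
  have hcoe : ∀ Y : Matrix (Fin N) (Fin N) ℂ, ℓc.symm (φe Y) = Y := by
    intro Y
    rw [← hco, ContinuousLinearEquiv.symm_apply_apply]
  have h := NormedSpace.exp_series_hasSum_exp' (𝕂 := ℂ) (φe M)
  have h2 := ((ℓc.symm :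
    (EuclideanSpace ℂ (Fin N) →L[ℂ] EuclideanSpace ℂ (Fin N)) →L[ℂ]
      Matrix (Fin N) (Fin N) ℂ)).hasSum h
  have hfun : ∀ k : ℕ, (ℓc.symm :
      (EuclideanSpace ℂ (Fin N) →L[ℂ] EuclideanSpace ℂ (Fin N)) →L[ℂ]
        Matrix (Fin N) (Fin N) ℂ) (((Nat.factorial k : ℂ))⁻¹ • (φe M) ^ k)
      = ((Nat.factorial k : ℂ))⁻¹ • M ^ k := by
    intro k
    rw [_root_.map_smul]
    congr 1
    rw [← _root_.map_pow φe M k]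
    exact hcoe _
  have h3 : HasSum (fun k : ℕ => ((Nat.factorial k : ℂ))⁻¹ • M ^ k)
      (ℓc.symm (NormedSpace.exp (φe M))) := by
    simpa [hfun] using h2
  have h4 : NormedSpace.exp M = ℓc.symm (NormedSpace.exp (φe M)) := by
    rw [NormedSpace.exp_eq_tsum ℂ]
    exact h3.tsum_eq
  rw [h4, ← hco, ContinuousLinearEquiv.apply_symm_apply]

end Transfer

theorem interaction_picture_bound {n : ℕ} (A B : Matrix (Fin n) (Fin n) ℂ)
    (hA : A.IsHermitian) (hB : B.IsHermitian) (lam : ℝ) (hlam : 0 < lam)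
    (h1 : ∀ m : ℕ, 1 ≤ m →
      opNorm (adPow (A + B) (m - 1) (matComm A B)) ≤
        (2 * lam) ^ (m - 1) * (Nat.factorial m) * opNorm (matComm A B))
    (h2 : ∀ (nn m : ℕ), 1 ≤ m →
      opNorm (adPow B nn (adPow (A + B) m B)) ≤
        2 ^ (m - 1) * lam ^ (nn + m - 1) * (Nat.factorial (nn + m)) * opNorm (matComm A B)) :
    ∀ x : ℝ, |x| < 1 / (3 * lam) →
      opNorm
        (NormedSpace.exp ((-x : ℂ) • B) * NormedSpace.exp ((x : ℂ) • (A + B)) * B *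
            NormedSpace.exp ((-x : ℂ) • (A + B)) * NormedSpace.exp ((x : ℂ) • B) - B) ≤
        |x| * opNorm (matComm A B) / ((1 - 3 * lam * |x|) * (1 - lam * |x|)) := by
  intro x hx
  have hK0 : 0 ≤ opNorm (matComm A B) := norm_nonneg _
  set φ := Matrix.toEuclideanCLM (𝕜 := ℂ) (n := Fin n) with hφ
  set B' := φ B with hB'
  set H' := φ (A + B) with hH'
  have e1 : φ ((-(x:ℂ)) • B) = -((x:ℂ) • B') := by
    rw [_root_.map_smul]
    exact neg_smul (x:ℂ) B'
  have e2 : φ ((-(x:ℂ)) • (A + B)) = -((x:ℂ) • H') := by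
    rw [_root_.map_smul]
    exact neg_smul (x:ℂ) H'
  have e3 : φ ((x:ℂ) • (A + B)) = (x:ℂ) • H' := _root_.map_smul φ _ _
  have e4 : φ ((x:ℂ) • B) = (x:ℂ) • B' := _root_.map_smul φ _ _
  have hgoal : opNorm
      (NormedSpace.exp ((-x : ℂ) • B) * NormedSpace.exp ((x : ℂ) • (A + B)) * B *
          NormedSpace.exp ((-x : ℂ) • (A + B)) * NormedSpace.exp ((x : ℂ) • B) - B)
      = ‖NormedSpace.exp (-((x:ℂ) • B')) * NormedSpace.exp ((x:ℂ) • H') * B' *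
          NormedSpace.exp (-((x:ℂ) • H')) * NormedSpace.exp ((x:ℂ) • B') - B'‖ := by
    rw [opNorm_def]
    congr 1
    rw [_root_.map_sub, _root_.map_mul, _root_.map_mul, _root_.map_mul, _root_.map_mul,
      phi_exp, phi_exp, phi_exp, phi_exp, e1, e2, e3, e4, ← hB']
  rw [hgoal]
  -- identify with exp (adL ...) form
  have hrw : NormedSpace.exp (-((x:ℂ) • B')) * NormedSpace.exp ((x:ℂ) • H') * B' *
        NormedSpace.exp (-((x:ℂ) • H')) * NormedSpace.exp ((x:ℂ) • B') - B'
      = NormedSpace.exp (adL (-((x:ℂ) • B')))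
          (NormedSpace.exp (adL ((x:ℂ) • H')) B' - B') := by
    have hSb : NormedSpace.exp (adL (-((x:ℂ) • B'))) B' = B' := by
      rw [exp_adL, neg_neg]
      have hc : Commute (-((x:ℂ) • B')) B' := ((Commute.refl B').smul_left (x:ℂ)).neg_left
      have hc' := hc.exp_left
      rw [hc'.eq, mul_assoc,
        ← NormedSpace.exp_add_of_commute ((Commute.refl ((x:ℂ) • B')).neg_left),
        neg_add_cancel, NormedSpace.exp_zero, mul_one]
    rw [_root_.map_sub, hSb, exp_adL, exp_adL, neg_neg]
    simp only [mul_assoc]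
  rw [hrw]
  -- transport the commutator hypothesis
  have hcomm : ∀ nn m : ℕ, 1 ≤ m →
      ‖((adL B') ^ nn) (((adL H') ^ m) B')‖ ≤
        2 ^ (m - 1) * lam ^ (nn + m - 1) * (Nat.factorial (nn + m)) * opNorm (matComm A B) := by
    intro nn m hm
    have := h2 nn m hm
    rw [opNorm_def, phi_adPow, phi_adPow] at this
    exact this
  exact main_bound B' H' lam x (opNorm (matComm A B)) hlam hK0 hcomm hx
end

section
/- Let ρ be a density matrix, A a Hermitian operator, and λ, σ > 0 constants. Suppose that for every positive integer m, Tr(A^m ρ) ≤ λ^m (m−1 + σ/λ)(m−2 + σ/λ)···(σ/λ) = λ^m ∏_{j=0}^{m-1}(j + σ/λ). Then for all τ with 0 ≤ λτ < 1, Tr(e^{τA} ρ) ≤ (1 − λτ)^{−σ/λ}. -/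
open Matrix
open scoped ComplexOrder

lemma binom_iter_deriv (s : ℝ) (m : ℕ) :
    ∀ z : ℂ, z.re < 1 →
      iteratedDeriv m (fun w : ℂ => (1 - w) ^ (-(s:ℂ))) z
        = (∏ j ∈ Finset.range m, ((j : ℂ) + s)) * (1 - z) ^ (-(s:ℂ) - m) := by
  induction m with
  | zero => intro z hz; simp
  | succ m ih =>
    intro z hz
    have hopen : IsOpen {w : ℂ | w.re < 1} := isOpen_lt Complex.continuous_re continuous_const
    have hev : iteratedDeriv m (fun w : ℂ => (1 - w) ^ (-(s:ℂ)))
        =ᶠ[nhds z] fun w => (∏ j ∈ Finset.range m, ((j : ℂ) + s)) * (1 - w) ^ (-(s:ℂ) - m) := by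
      filter_upwards [hopen.mem_nhds hz] with w hw using ih w hw
    rw [iteratedDeriv_succ, hev.deriv_eq]
    have hd : HasDerivAt (fun w : ℂ => (1 - w) ^ (-(s:ℂ) - m))
        ((-(s:ℂ) - m) * (1 - z) ^ (-(s:ℂ) - m - 1) * (-1)) z := by
      refine HasDerivAt.cpow_const ?_ ?_
      · simpa using (hasDerivAt_id z).const_sub 1
      · exact Complex.mem_slitPlane_iff.2 (Or.inl (by simp; linarith))
    rw [(hd.const_mul _).deriv]
    rw [Finset.prod_range_succ]
    have : -(s:ℂ) - m - 1 = -(s:ℂ) - (m + 1 : ℕ) := by push_cast; ring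
    rw [this]
    ring

lemma binom_hasSum {s x : ℝ} (hs : 0 < s) (hx0 : 0 ≤ x) (hx1 : x < 1) :
    HasSum (fun m : ℕ => x ^ m / m.factorial * ∏ j ∈ Finset.range m, ((j : ℝ) + s))
      ((1 - x) ^ (-s)) := by
  have hdiff : DifferentiableOn ℂ (fun w : ℂ => (1 - w) ^ (-(s:ℂ))) (Metric.ball 0 1) := by
    intro z hz
    have hz1 : z.re < 1 := by
      have hn : ‖z‖ < 1 := by simpa using mem_ball_zero_iff.1 hz
      linarith [lt_of_le_of_lt (Complex.re_le_norm z) hn]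
    have hd : HasDerivAt (fun w : ℂ => (1 - w) ^ (-(s:ℂ)))
        ((-(s:ℂ)) * (1 - z) ^ (-(s:ℂ) - 1) * (-1)) z := by
      refine HasDerivAt.cpow_const ?_ ?_
      · simpa using (hasDerivAt_id z).const_sub 1
      · exact Complex.mem_slitPlane_iff.2 (Or.inl (by simp; linarith))
    exact hd.differentiableAt.differentiableWithinAt
  have hxball : (x : ℂ) ∈ Metric.ball (0:ℂ) 1 := by
    rw [mem_ball_zero_iff]
    simpa [Complex.norm_real] using abs_lt.2 ⟨by linarith, hx1⟩
  have H := Complex.hasSum_taylorSeries_on_ball hdiff hxball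
  have H2 : HasSum (fun m : ℕ =>
      ((x ^ m / m.factorial * ∏ j ∈ Finset.range m, ((j : ℝ) + s) : ℝ) : ℂ))
      (((1 - x) ^ (-s) : ℝ) : ℂ) := by
    convert H using 2 with m
    · rfl
    · rw [binom_iter_deriv s m 0 (by simp)]
      push_cast
      simp only [sub_zero, Nat.cast_zero, smul_eq_mul, Complex.one_cpow]
      ring
    · rw [Complex.ofReal_cpow (by linarith : (0:ℝ) ≤ 1 - x)]
      push_cast
      ring_nf
  exact Complex.hasSum_ofReal.1 H2

lemma matrix_exp_hasSum {n : ℕ} (M : Matrix (Fin n) (Fin n) ℂ) :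
    HasSum (fun m : ℕ => ((m.factorial : ℂ))⁻¹ • M ^ m) (NormedSpace.exp M) := by
  letI : SeminormedRing (Matrix (Fin n) (Fin n) ℂ) := Matrix.linftyOpSemiNormedRing
  letI : NormedRing (Matrix (Fin n) (Fin n) ℂ) := Matrix.linftyOpNormedRing
  letI : NormedAlgebra ℂ (Matrix (Fin n) (Fin n) ℂ) := Matrix.linftyOpNormedAlgebra
  exact NormedSpace.exp_series_hasSum_exp' (𝕂 := ℂ) M

set_option maxHeartbeats 1000000 in
theorem mgf_from_moment_bounds {n : ℕ} (ρ A : Matrix (Fin n) (Fin n) ℂ)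
    (hρ : ρ.PosSemidef) (hρtr : ρ.trace = 1) (hA : A.IsHermitian)
    (lam sigma : ℝ) (hlam : 0 < lam) (hsigma : 0 < sigma)
    (hmom : ∀ m : ℕ, 1 ≤ m →
      (Matrix.trace (A ^ m * ρ)).re ≤
        lam ^ m * ∏ j ∈ Finset.range m, ((j : ℝ) + sigma / lam)) :
    ∀ τ : ℝ, 0 ≤ τ → lam * τ < 1 →
      (Matrix.trace (NormedSpace.exp ((τ : ℂ) • A) * ρ)).re ≤
        (1 - lam * τ) ^ (-(sigma / lam)) := by
  intro τ hτ hlt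
  -- the continuous linear functional X ↦ trace (X * ρ)
  have hcont : Continuous fun X : Matrix (Fin n) (Fin n) ℂ => (X * ρ).trace := by
    simp only [Matrix.trace, Matrix.diag, Matrix.mul_apply]
    exact continuous_finset_sum _ fun i _ => continuous_finset_sum _ fun j _ =>
      ((continuous_id.matrix_elem i j).mul continuous_const)
  have hadd : ∀ X Y : Matrix (Fin n) (Fin n) ℂ,
      ((X + Y) * ρ).trace = (X * ρ).trace + (Y * ρ).trace := by
    intro X Y; rw [add_mul, Matrix.trace_add]
  have H0 := matrix_exp_hasSum ((τ : ℂ) • A)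
  let g : Matrix (Fin n) (Fin n) ℂ →+ ℂ := AddMonoidHom.mk' (fun X => (X * ρ).trace) hadd
  have hcontg : Continuous g := hcont
  have H1 : HasSum (fun m : ℕ => ((((m.factorial : ℂ))⁻¹ • ((τ:ℂ) • A) ^ m) * ρ).trace)
      ((NormedSpace.exp ((τ : ℂ) • A) * ρ).trace) :=
    H0.map g hcontg
  have H2 : HasSum (fun m : ℕ => τ ^ m / m.factorial * (Matrix.trace (A ^ m * ρ)).re)
      ((Matrix.trace (NormedSpace.exp ((τ : ℂ) • A) * ρ)).re) := by
    have := Complex.hasSum_re H1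
    refine this.congr_fun fun m => ?_
    have : ((((m.factorial : ℂ))⁻¹ • ((τ:ℂ) • A) ^ m) * ρ)
        = (((τ ^ m / m.factorial : ℝ) : ℂ)) • (A ^ m * ρ) := by
      rw [smul_pow, smul_smul, smul_mul_assoc]
      congr 1
      push_cast
      ring
    rw [this, Matrix.trace_smul, smul_eq_mul, Complex.re_ofReal_mul]
  have hB := binom_hasSum (div_pos hsigma hlam) (mul_nonneg hlam.le hτ) hlt
  refine hasSum_le ?_ H2 hB
  intro m
  rcases Nat.eq_zero_or_pos m with hm | hm
  · subst hm
    simp [hρtr]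
  · have hb := hmom m hm
    have hc : 0 ≤ τ ^ m / m.factorial := by positivity
    calc τ ^ m / m.factorial * (Matrix.trace (A ^ m * ρ)).re
        ≤ τ ^ m / m.factorial * (lam ^ m * ∏ j ∈ Finset.range m, ((j : ℝ) + sigma / lam)) :=
          mul_le_mul_of_nonneg_left hb hc
      _ = (lam * τ) ^ m / m.factorial * ∏ j ∈ Finset.range m, ((j : ℝ) + sigma / lam) := by
          rw [mul_pow]; ring
end

section
/- For all integers n̄ ≥ 1 and 1 ≤ m ≤ n̄: Σ_{j=0}^{m−1} binom(n̄ − m + j − 1, j) · binom(n̄, m − j) ≤ 2^m · binom(n̄, m). -/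
theorem binomial_sum_bound (nbar m : ℕ) (hm : 1 ≤ m) (hmn : m ≤ nbar) :
    ∑ j ∈ Finset.range m, (nbar - m + j - 1).choose j * nbar.choose (m - j) ≤
      2 ^ m * nbar.choose m := by
  calc ∑ j ∈ Finset.range m, (nbar - m + j - 1).choose j * nbar.choose (m - j)
      ≤ ∑ j ∈ Finset.range m, m.choose j * nbar.choose m := by
        apply Finset.sum_le_sum
        intro j hj
        have hjm : j ≤ m := (Finset.mem_range.mp hj).le
        have key : nbar.choose m * m.choose j =
            nbar.choose (m - j) * (nbar - (m - j)).choose j := by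
          have h := Nat.choose_mul (n := nbar) (Nat.sub_le m j)
          rwa [Nat.sub_sub_self hjm, Nat.choose_symm hjm] at h
        calc (nbar - m + j - 1).choose j * nbar.choose (m - j)
            ≤ (nbar - (m - j)).choose j * nbar.choose (m - j) := by
              apply Nat.mul_le_mul_right
              exact Nat.choose_le_choose j (by omega)
          _ = m.choose j * nbar.choose m := by rw [mul_comm, ← key, mul_comm]
    _ = (∑ j ∈ Finset.range m, m.choose j) * nbar.choose m := by
        rw [Finset.sum_mul]
    _ ≤ 2 ^ m * nbar.choose m := by
        apply Nat.mul_le_mul_right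
        calc ∑ j ∈ Finset.range m, m.choose j
            ≤ ∑ j ∈ Finset.range (m + 1), m.choose j :=
              Finset.sum_le_sum_of_subset (Finset.range_subset_range.mpr (Nat.le_succ m))
          _ = 2 ^ m := Nat.sum_range_choose m
end
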